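/- Let (y_i)_{i≥0} be vectors in ℝ^K satisfying the recursion y_i = Aᵀ y_{i-1} + x_i, where A is a K×K primitive left-stochastic matrix with Perron vector v, and the perturbations x_i satisfy Vᵀ x_i = 0 (with V = v 𝟙ᵀ) and ‖x_i‖ → 0 almost surely. Then each component of y_i converges almost surely to the common value vᵀ y₀ = ∑_k v_k (y₀)_k. -/

import Mathlib

open MeasureTheory Filter Finset
section StmtAux
variable {K : ℕ}

noncomputable def osc (hK : 0 < K) (u : Fin K → ℝ) : ℝ :=
  (univ.sup' (univ_nonempty_iff.mpr ⟨⟨0, hK⟩⟩) u) - (univ.inf' (univ_nonempty_iff.mpr ⟨⟨0, hK⟩⟩) u)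

variable (hK : 0 < K)

lemma osc_nonneg (u : Fin K → ℝ) : 0 ≤ osc hK u := by
  simp only [osc, sub_nonneg]
  exact le_trans (Finset.inf'_le u (mem_univ (⟨0, hK⟩ : Fin K)))
    (Finset.le_sup' u (mem_univ (⟨0, hK⟩ : Fin K)))

lemma le_sup'' (u : Fin K → ℝ) (k : Fin K) :
    u k ≤ univ.sup' (univ_nonempty_iff.mpr ⟨⟨0, hK⟩⟩) u :=
  Finset.le_sup' _ (mem_univ k)

lemma inf_le'' (u : Fin K → ℝ) (k : Fin K) :
    univ.inf' (univ_nonempty_iff.mpr ⟨⟨0, hK⟩⟩) u ≤ u k :=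
  Finset.inf'_le _ (mem_univ k)

lemma osc_add_le (u w : Fin K → ℝ) : osc hK (u + w) ≤ osc hK u + osc hK w := by
  unfold osc
  have h1 : univ.sup' (univ_nonempty_iff.mpr ⟨⟨0, hK⟩⟩) (u + w) ≤
      univ.sup' (univ_nonempty_iff.mpr ⟨⟨0, hK⟩⟩) u +
      univ.sup' (univ_nonempty_iff.mpr ⟨⟨0, hK⟩⟩) w := by
    apply Finset.sup'_le
    intro k _
    exact add_le_add (le_sup'' hK u k) (le_sup'' hK w k)
  have h2 : univ.inf' (univ_nonempty_iff.mpr ⟨⟨0, hK⟩⟩) u +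
      univ.inf' (univ_nonempty_iff.mpr ⟨⟨0, hK⟩⟩) w ≤
      univ.inf' (univ_nonempty_iff.mpr ⟨⟨0, hK⟩⟩) (u + w) := by
    apply Finset.le_inf'
    intro k _
    exact add_le_add (inf_le'' hK u k) (inf_le'' hK w k)
  linarith

lemma osc_le_two_norm (u : Fin K → ℝ) : osc hK u ≤ 2 * ‖u‖ := by
  unfold osc
  have h1 : univ.sup' (univ_nonempty_iff.mpr ⟨⟨0, hK⟩⟩) u ≤ ‖u‖ := by
    apply Finset.sup'_le; intro k _
    calc u k ≤ |u k| := le_abs_self _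
    _ ≤ ‖u‖ := norm_le_pi_norm u k
  have h2 : -‖u‖ ≤ univ.inf' (univ_nonempty_iff.mpr ⟨⟨0, hK⟩⟩) u := by
    apply Finset.le_inf'; intro k _
    have h3 : |u k| ≤ ‖u‖ := norm_le_pi_norm u k
    have := neg_abs_le (u k); linarith
  linarith

lemma rowsum_mul {M N : Matrix (Fin K) (Fin K) ℝ} (hM : ∀ k, ∑ ℓ, M k ℓ = 1)
    (hN : ∀ k, ∑ ℓ, N k ℓ = 1) : ∀ k, ∑ ℓ, (M * N) k ℓ = 1 := by
  intro k
  simp only [Matrix.mul_apply]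
  rw [Finset.sum_comm]
  calc ∑ j, ∑ ℓ, M k j * N j ℓ = ∑ j, M k j * ∑ ℓ, N j ℓ := by
        congr 1; ext j; rw [Finset.mul_sum]
  _ = 1 := by simp only [hN, mul_one]; exact hM k

lemma rowsum_pow {M : Matrix (Fin K) (Fin K) ℝ} (hM : ∀ k, ∑ ℓ, M k ℓ = 1) (n : ℕ) :
    ∀ k, ∑ ℓ, (M ^ n) k ℓ = 1 := by
  induction n with
  | zero => intro k; simp [Matrix.one_apply]
  | succ n ih => rw [pow_succ]; exact rowsum_mul ih hM

lemma nonneg_mul {M N : Matrix (Fin K) (Fin K) ℝ} (hM : ∀ k ℓ, 0 ≤ M k ℓ)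
    (hN : ∀ k ℓ, 0 ≤ N k ℓ) : ∀ k ℓ, 0 ≤ (M * N) k ℓ := by
  intro k ℓ
  simp only [Matrix.mul_apply]
  exact Finset.sum_nonneg fun j _ => mul_nonneg (hM k j) (hN j ℓ)

lemma nonneg_pow {M : Matrix (Fin K) (Fin K) ℝ} (hM : ∀ k ℓ, 0 ≤ M k ℓ) (n : ℕ) :
    ∀ k ℓ, 0 ≤ (M ^ n) k ℓ := by
  induction n with
  | zero => intro k ℓ; simp [Matrix.one_apply]; split <;> norm_num
  | succ n ih => rw [pow_succ]; exact nonneg_mul ih hM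

lemma norm_mulVec_le {M : Matrix (Fin K) (Fin K) ℝ} (hM0 : ∀ k ℓ, 0 ≤ M k ℓ)
    (hM1 : ∀ k, ∑ ℓ, M k ℓ = 1) (u : Fin K → ℝ) : ‖M.mulVec u‖ ≤ ‖u‖ := by
  rw [pi_norm_le_iff_of_nonneg (norm_nonneg u)]
  intro k
  simp only [Matrix.mulVec, dotProduct, Real.norm_eq_abs]
  calc |∑ ℓ, M k ℓ * u ℓ| ≤ ∑ ℓ, |M k ℓ * u ℓ| := Finset.abs_sum_le_sum_abs _ _
  _ ≤ ∑ ℓ, M k ℓ * ‖u‖ := by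
      apply Finset.sum_le_sum; intro ℓ _
      rw [abs_mul, abs_of_nonneg (hM0 k ℓ)]
      exact mul_le_mul_of_nonneg_left (norm_le_pi_norm u ℓ) (hM0 k ℓ)
  _ = ‖u‖ := by rw [← Finset.sum_mul, hM1 k, one_mul]

lemma osc_contract {δ : ℝ} (hδ0 : 0 ≤ δ) {M : Matrix (Fin K) (Fin K) ℝ}
    (hMδ : ∀ k ℓ, δ ≤ M k ℓ) (hM1 : ∀ k, ∑ ℓ, M k ℓ = 1) (u : Fin K → ℝ) :
    osc hK (M.mulVec u) ≤ (1 - K * δ) * osc hK u := by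
  set S := univ.sup' (univ_nonempty_iff.mpr ⟨⟨0, hK⟩⟩) u with hS
  set I := univ.inf' (univ_nonempty_iff.mpr ⟨⟨0, hK⟩⟩) u with hI
  set T := ∑ ℓ, u ℓ with hT
  have hIS : I ≤ S := le_trans (Finset.inf'_le u (mem_univ (⟨0, hK⟩ : Fin K)))
    (Finset.le_sup' u (mem_univ (⟨0, hK⟩ : Fin K)))
  have hKδ : (K : ℝ) * δ ≤ 1 := by
    have := hM1 ⟨0, hK⟩
    calc (K : ℝ) * δ = ∑ _ℓ : Fin K, δ := by simp [mul_comm]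
    _ ≤ ∑ ℓ, M ⟨0, hK⟩ ℓ := Finset.sum_le_sum fun ℓ _ => hMδ _ ℓ
    _ = 1 := this
  have key : ∀ k, (1 - K * δ) * I + δ * T ≤ M.mulVec u k ∧
      M.mulVec u k ≤ (1 - K * δ) * S + δ * T := by
    intro k
    have hdec : M.mulVec u k = (∑ ℓ, (M k ℓ - δ) * u ℓ) + δ * T := by
      simp only [Matrix.mulVec, dotProduct, hT, Finset.mul_sum]
      rw [← Finset.sum_add_distrib]
      congr 1; ext ℓ; ring
    have hsum : ∑ ℓ, (M k ℓ - δ) = 1 - K * δ := by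
      rw [Finset.sum_sub_distrib, hM1 k]; simp [mul_comm]
    constructor
    · rw [hdec]
      have h : (1 - K * δ) * I = ∑ ℓ, (M k ℓ - δ) * I := by rw [← Finset.sum_mul, hsum]
      rw [h]
      apply add_le_add_left
      apply Finset.sum_le_sum; intro ℓ _
      exact mul_le_mul_of_nonneg_left (Finset.inf'_le u (mem_univ ℓ)) (by linarith [hMδ k ℓ])
    · rw [hdec]
      have h : (1 - K * δ) * S = ∑ ℓ, (M k ℓ - δ) * S := by rw [← Finset.sum_mul, hsum]
      rw [h]
      apply add_le_add_left
      apply Finset.sum_le_sum; intro ℓ _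
      exact mul_le_mul_of_nonneg_left (Finset.le_sup' u (mem_univ ℓ)) (by linarith [hMδ k ℓ])
  have h1 : univ.sup' (univ_nonempty_iff.mpr ⟨⟨0, hK⟩⟩) (M.mulVec u) ≤ (1 - K * δ) * S + δ * T :=
    Finset.sup'_le _ _ fun k _ => (key k).2
  have h2 : (1 - K * δ) * I + δ * T ≤ univ.inf' (univ_nonempty_iff.mpr ⟨⟨0, hK⟩⟩) (M.mulVec u) :=
    Finset.le_inf' _ _ fun k _ => (key k).1
  unfold osc
  rw [← hS, ← hI]
  have h3 : (1 - (K:ℝ) * δ) * (S - I) = ((1 - K * δ) * S + δ * T) - ((1 - K * δ) * I + δ * T) := by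
    ring
  linarith

lemma mulVec_sum' {M : Matrix (Fin K) (Fin K) ℝ} {α : Type*} (s : Finset α) (f : α → Fin K → ℝ) :
    M.mulVec (∑ j ∈ s, f j) = ∑ j ∈ s, M.mulVec (f j) := by
  classical
  induction s using Finset.induction_on with
  | empty => simp [Matrix.mulVec_zero]
  | insert _ _ h ih => rw [Finset.sum_insert h, Finset.sum_insert h, Matrix.mulVec_add, ih]

lemma unroll {B : Matrix (Fin K) (Fin K) ℝ} {z w : ℕ → Fin K → ℝ}
    (hrec : ∀ i, z (i + 1) = B.mulVec (z i) + w (i + 1)) (i s : ℕ) :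
    z (i + s) = (B ^ s).mulVec (z i) +
      ∑ j ∈ range s, (B ^ (s - 1 - j)).mulVec (w (i + j + 1)) := by
  induction s with
  | zero => simp [Matrix.one_mulVec]
  | succ s ih =>
    have h0 : i + (s + 1) = (i + s) + 1 := by ring
    rw [h0, hrec (i + s), ih, Matrix.mulVec_add, mulVec_sum']
    have e1 : B.mulVec ((B ^ s).mulVec (z i)) = (B ^ (s + 1)).mulVec (z i) := by
      rw [Matrix.mulVec_mulVec, ← pow_succ']
    have e2 : ∀ j ∈ range s, B.mulVec ((B ^ (s - 1 - j)).mulVec (w (i + j + 1)))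
        = (B ^ (s + 1 - 1 - j)).mulVec (w (i + j + 1)) := by
      intro j hj
      have hjs := Finset.mem_range.mp hj
      rw [Matrix.mulVec_mulVec, ← pow_succ',
        show s - 1 - j + 1 = s + 1 - 1 - j from by omega]
    have e3 : (B ^ (s + 1 - 1 - s)).mulVec (w (i + s + 1)) = w (i + s + 1) := by
      rw [show s + 1 - 1 - s = 0 from by omega, pow_zero, Matrix.one_mulVec]
    rw [Finset.sum_range_succ, e3, Finset.sum_congr rfl e2, e1]
    abel

lemma core {B : Matrix (Fin K) (Fin K) ℝ} (hB0 : ∀ k ℓ, 0 ≤ B k ℓ)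
    (hB1 : ∀ k, ∑ ℓ, B k ℓ = 1) {m : ℕ} (hm : 1 ≤ m) {δ : ℝ} (hδ : 0 < δ)
    (hBm : ∀ k ℓ, δ ≤ (B ^ m) k ℓ) {z w : ℕ → Fin K → ℝ}
    (hrec : ∀ i, z (i + 1) = B.mulVec (z i) + w (i + 1))
    (hw : Tendsto (fun i => ‖w i‖) atTop (nhds 0)) :
    Tendsto (fun i => osc hK (z i)) atTop (nhds 0) := by
  set c : ℝ := 1 - K * δ with hc
  have hKδ1 : (K : ℝ) * δ ≤ 1 := by
    calc (K : ℝ) * δ = ∑ _ℓ : Fin K, δ := by simp [mul_comm]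
    _ ≤ ∑ ℓ, (B ^ m) ⟨0, hK⟩ ℓ := Finset.sum_le_sum fun ℓ _ => hBm _ ℓ
    _ = 1 := rowsum_pow hB1 m _
  have hc0 : 0 ≤ c := by simp only [hc]; linarith
  have hc1 : c < 1 := by
    have h : 0 < (K : ℝ) * δ := by
      apply mul_pos _ hδ
      exact_mod_cast hK
    simp only [hc]; linarith
  have hoscpow : ∀ (s : ℕ) (u : Fin K → ℝ), osc hK ((B ^ s).mulVec u) ≤ osc hK u := by
    intro s u
    have h := osc_contract hK (le_refl (0:ℝ)) (M := B ^ s)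
      (fun k ℓ => nonneg_pow hB0 s k ℓ) (rowsum_pow hB1 s) u
    simpa using h
  have hstep : ∀ i s, osc hK (z (i + s)) ≤ osc hK ((B ^ s).mulVec (z i))
      + 2 * ∑ j ∈ range s, ‖w (i + j + 1)‖ := by
    intro i s
    rw [unroll hrec i s]
    refine le_trans (osc_add_le hK _ _) ?_
    apply add_le_add_right
    refine le_trans (osc_le_two_norm hK _) ?_
    have h1 : ‖∑ j ∈ range s, (B ^ (s - 1 - j)).mulVec (w (i + j + 1))‖
        ≤ ∑ j ∈ range s, ‖w (i + j + 1)‖ := by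
      refine le_trans (norm_sum_le _ _) ?_
      apply Finset.sum_le_sum
      intro j _
      exact norm_mulVec_le (nonneg_pow hB0 _) (rowsum_pow hB1 _) _
    linarith
  have hmstep : ∀ i, osc hK (z (i + m)) ≤ c * osc hK (z i)
      + 2 * ∑ j ∈ range m, ‖w (i + j + 1)‖ := by
    intro i
    refine le_trans (hstep i m) ?_
    apply add_le_add_left
    exact osc_contract hK (le_of_lt hδ) hBm (rowsum_pow hB1 m) _
  rw [Metric.tendsto_atTop]
  intro ε hε
  set ε' : ℝ := ε * (1 - c) / (8 * m) with hε'
  have hε'pos : 0 < ε' := by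
    apply div_pos (mul_pos hε (by linarith))
    have hm0 : (0:ℝ) < m := by exact_mod_cast hm
    positivity
  obtain ⟨N, hN⟩ := (Metric.tendsto_atTop.mp hw) ε' hε'pos
  have hwN : ∀ i, N ≤ i → ‖w i‖ ≤ ε' := by
    intro i hi
    have h := hN i hi
    rw [Real.dist_eq, sub_zero, abs_of_nonneg (norm_nonneg _)] at h
    linarith
  set D : ℝ := osc hK (z N) with hD
  have hD0 : 0 ≤ D := osc_nonneg hK _
  set T : ℝ := 2 * m * ε' / (1 - c) with hT
  have hT0 : 0 ≤ T := by
    apply div_nonneg _ (by linarith)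
    positivity
  have hc2 : (1:ℝ) - c ≠ 0 := by linarith
  have hTc' : T * (1 - c) = 2 * m * ε' := div_mul_cancel₀ _ hc2
  have hTc : c * T + 2 * m * ε' = T := by linear_combination (-1 : ℝ) * hTc'
  have hwin : ∀ i s, N ≤ i → s ≤ m → (∑ j ∈ range s, ‖w (i + j + 1)‖) ≤ m * ε' := by
    intro i s hi hs
    calc (∑ j ∈ range s, ‖w (i + j + 1)‖) ≤ ∑ _j ∈ range s, ε' := by
          apply Finset.sum_le_sum
          intro j _
          exact hwN _ (by omega)
    _ = s * ε' := by simp [mul_comm]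
    _ ≤ m * ε' := by
        apply mul_le_mul_of_nonneg_right _ (le_of_lt hε'pos)
        exact_mod_cast hs
  have hiter : ∀ j : ℕ, osc hK (z (N + j * m)) ≤ c ^ j * D + T := by
    intro j
    induction j with
    | zero => simp only [Nat.zero_mul, Nat.add_zero, pow_zero, one_mul]; linarith
    | succ j ih =>
      have h1 : N + (j + 1) * m = (N + j * m) + m := by ring
      rw [h1]
      refine le_trans (hmstep (N + j * m)) ?_
      have h2 : (∑ t ∈ range m, ‖w (N + j * m + t + 1)‖) ≤ m * ε' :=
        hwin _ m (by omega) le_rfl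
      have h3 : c * osc hK (z (N + j * m)) ≤ c * (c ^ j * D + T) :=
        mul_le_mul_of_nonneg_left ih hc0
      have h4 : c * (c ^ j * D + T) = c ^ (j + 1) * D + c * T := by ring
      nlinarith
  have htendpow : Tendsto (fun j : ℕ => c ^ j * D) atTop (nhds 0) := by
    have h := tendsto_pow_atTop_nhds_zero_of_lt_one hc0 hc1
    simpa using h.mul_const D
  obtain ⟨J, hJ⟩ := (Metric.tendsto_atTop.mp htendpow) (ε / 4) (by linarith)
  refine ⟨N + J * m, ?_⟩
  intro i hi
  obtain ⟨j, s, hidec, hsm, hjJ⟩ :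
      ∃ j s, i = (N + j * m) + s ∧ s < m ∧ J ≤ j := by
    refine ⟨(i - N) / m, (i - N) % m, ?_, Nat.mod_lt _ (by omega), ?_⟩
    · have h1 := Nat.div_add_mod (i - N) m
      have h2 : (i - N) / m * m = m * ((i - N) / m) := Nat.mul_comm _ _
      omega
    · exact (Nat.le_div_iff_mul_le (by omega : 0 < m)).mpr (by omega)
  have hb1 : osc hK (z i) ≤ osc hK (z (N + j * m)) + 2 * (m * ε') := by
    rw [hidec]
    refine le_trans (hstep _ s) ?_
    have h5 := hoscpow s (z (N + j * m))
    have h6 := hwin (N + j * m) s (by omega) (le_of_lt hsm)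
    linarith
  have hb2 : osc hK (z (N + j * m)) ≤ c ^ j * D + T := hiter j
  have hb3 : c ^ j * D ≤ ε / 4 := by
    have h := hJ j hjJ
    rw [Real.dist_eq, sub_zero] at h
    have habs : |c ^ j * D| = c ^ j * D := by
      apply abs_of_nonneg
      positivity
    linarith [le_of_lt h, habs.symm.le]
  have hm0 : (0:ℝ) < m := by exact_mod_cast hm
  have hm0' : (m:ℝ) ≠ 0 := ne_of_gt hm0
  have hbT : T ≤ ε / 4 := by
    have hTeq : T = ε / 4 := by
      rw [hT, hε']
      field_simp
      ring
    linarith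
  have hb4 : 2 * (m * ε') ≤ ε / 4 := by
    rw [hε']
    have h7 : (2:ℝ) * (m * (ε * (1 - c) / (8 * m))) = ε * (1 - c) / 4 := by
      field_simp; ring
    rw [h7]
    nlinarith
  rw [Real.dist_eq, sub_zero, abs_of_nonneg (osc_nonneg hK _)]
  linarith

end StmtAux

/-- for the recursion `y_i = Aᵀ y_{i-1} + x_i` with `A` a primitive
left-stochastic matrix with Perron vector `v`, perturbations satisfying `vᵀ x_i = 0`
and `‖x_i‖ → 0` a.s., every component of `y_i` converges a.s. to `∑_k v_k (y₀)_k`. -/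
theorem stmt_18 {Ω : Type*} {m0 : MeasurableSpace Ω} {μ : Measure Ω} [IsProbabilityMeasure μ]
    (K : ℕ) (A : Matrix (Fin K) (Fin K) ℝ) (v : Fin K → ℝ)
    (hA0 : ∀ k ℓ, 0 ≤ A k ℓ) (hAcol : ∀ k, ∑ ℓ, A ℓ k = 1)
    (hprim : ∃ m : ℕ, ∀ k ℓ, 0 < (A ^ m) k ℓ)
    (hPerron : A.mulVec v = v) (hvsum : ∑ k, v k = 1) (hvpos : ∀ k, 0 < v k)
    (y x : ℕ → Ω → Fin K → ℝ)
    (hrec : ∀ i, 1 ≤ i → ∀ ω,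
      y i ω = (Matrix.transpose A).mulVec (y (i - 1) ω) + x i ω)
    (hxnull : ∀ i ω, ∑ k, v k * x i ω k = 0)
    (hx : ∀ᵐ ω ∂μ, Tendsto (fun i => ‖x i ω‖) atTop (nhds 0)) :
    ∀ᵐ ω ∂μ, ∀ k, Tendsto (fun i => y i ω k) atTop
      (nhds (∑ ℓ, v ℓ * y 0 ω ℓ)) := by
  have hK : 0 < K := by
    rcases Nat.eq_zero_or_pos K with h0 | h0
    · subst h0
      simp at hvsum
    · exact h0
  obtain ⟨m, hm⟩ := hprim
  -- positivity of A ^ (m + 1)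
  have hm1 : ∀ k ℓ, 0 < (A ^ (m + 1)) k ℓ := by
    intro k ℓ
    rw [pow_succ, Matrix.mul_apply]
    have hex : ∃ j, 0 < A j ℓ := by
      by_contra h
      push_neg at h
      have h0 : ∑ j, A j ℓ = 0 :=
        Finset.sum_eq_zero fun j _ => le_antisymm (h j) (hA0 j ℓ)
      rw [hAcol ℓ] at h0
      norm_num at h0
    obtain ⟨j0, hj0⟩ := hex
    apply Finset.sum_pos'
    · intro j _
      exact mul_nonneg (hm k j).le (hA0 j ℓ)
    · exact ⟨j0, mem_univ _, mul_pos (hm k j0) hj0⟩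
  -- the uniform lower bound δ
  have hne : ((univ : Finset (Fin K)) ×ˢ (univ : Finset (Fin K))).Nonempty :=
    ⟨(⟨0, hK⟩, ⟨0, hK⟩), by simp⟩
  set δ : ℝ := (univ ×ˢ univ).inf' hne (fun p : Fin K × Fin K => (A ^ (m + 1)) p.1 p.2) with hδdef
  have hδpos : 0 < δ := by
    rw [hδdef, Finset.lt_inf'_iff]
    intro p _
    exact hm1 p.1 p.2
  have hδle : ∀ k ℓ, δ ≤ (A ^ (m + 1)) k ℓ := by
    intro k ℓ
    exact Finset.inf'_le _ (by simp : ((k, ℓ) : Fin K × Fin K) ∈ univ ×ˢ univ)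
  -- B = Aᵀ is row-stochastic
  have hB0 : ∀ k ℓ, 0 ≤ (Matrix.transpose A) k ℓ := fun k ℓ => hA0 ℓ k
  have hB1 : ∀ k, ∑ ℓ, (Matrix.transpose A) k ℓ = 1 := fun k => hAcol k
  have hBmδ : ∀ k ℓ, δ ≤ ((Matrix.transpose A) ^ (m + 1)) k ℓ := by
    intro k ℓ
    rw [← Matrix.transpose_pow]
    exact hδle ℓ k
  filter_upwards [hx] with ω hxω
  have hrecω : ∀ i, y (i + 1) ω = (Matrix.transpose A).mulVec (y i ω) + x (i + 1) ω := by
    intro i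
    have h := hrec (i + 1) (by omega) ω
    simpa using h
  have hosc : Tendsto (fun i => osc hK (y i ω)) atTop (nhds 0) :=
    core hK hB0 hB1 (Nat.succ_le_succ (Nat.zero_le m)) hδpos hBmδ hrecω hxω
  -- invariance of the weighted sum
  have hinv : ∀ i, ∑ k, v k * y i ω k = ∑ ℓ, v ℓ * y 0 ω ℓ := by
    intro i
    induction i with
    | zero => rfl
    | succ i ih =>
      rw [hrecω i]
      simp only [Pi.add_apply, mul_add, Finset.sum_add_distrib]
      rw [hxnull (i + 1) ω, add_zero]
      have key : ∑ k, v k * ((Matrix.transpose A).mulVec (y i ω)) k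
          = ∑ k, v k * y i ω k := by
        simp only [Matrix.mulVec, dotProduct, Matrix.transpose_apply, Finset.mul_sum]
        rw [Finset.sum_comm]
        have hptw : ∀ ℓ, ∑ k, v k * (A ℓ k * y i ω ℓ) = v ℓ * y i ω ℓ := by
          intro ℓ
          have hAv : ∑ k, A ℓ k * v k = v ℓ := congrFun hPerron ℓ
          calc ∑ k, v k * (A ℓ k * y i ω ℓ)
              = (∑ k, A ℓ k * v k) * y i ω ℓ := by
                rw [Finset.sum_mul]; congr 1; ext k; ring
          _ = v ℓ * y i ω ℓ := by rw [hAv]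
        rw [Finset.sum_congr rfl fun ℓ _ => hptw ℓ]
      rw [key]
      exact ih
  intro k
  have hbound : ∀ i, ‖y i ω k - ∑ ℓ, v ℓ * y 0 ω ℓ‖ ≤ osc hK (y i ω) := by
    intro i
    rw [← hinv i, Real.norm_eq_abs]
    set S' := univ.sup' (univ_nonempty_iff.mpr ⟨⟨0, hK⟩⟩) (y i ω) with hS'
    set I' := univ.inf' (univ_nonempty_iff.mpr ⟨⟨0, hK⟩⟩) (y i ω) with hI'
    have h1 : y i ω k ≤ S' := Finset.le_sup' _ (mem_univ k)
    have h2 : I' ≤ y i ω k := Finset.inf'_le _ (mem_univ k)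
    have h3 : ∑ ℓ, v ℓ * y i ω ℓ ≤ S' := by
      calc ∑ ℓ, v ℓ * y i ω ℓ ≤ ∑ ℓ, v ℓ * S' := by
            apply Finset.sum_le_sum
            intro ℓ _
            exact mul_le_mul_of_nonneg_left (Finset.le_sup' _ (mem_univ ℓ)) (hvpos ℓ).le
      _ = S' := by rw [← Finset.sum_mul, hvsum, one_mul]
    have h4 : I' ≤ ∑ ℓ, v ℓ * y i ω ℓ := by
      calc I' = ∑ ℓ, v ℓ * I' := by rw [← Finset.sum_mul, hvsum, one_mul]
      _ ≤ ∑ ℓ, v ℓ * y i ω ℓ := by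
            apply Finset.sum_le_sum
            intro ℓ _
            exact mul_le_mul_of_nonneg_left (Finset.inf'_le _ (mem_univ ℓ)) (hvpos ℓ).le
    rw [abs_sub_le_iff]
    constructor
    · show _ ≤ osc hK (y i ω)
      unfold osc
      rw [← hS', ← hI']
      linarith
    · show _ ≤ osc hK (y i ω)
      unfold osc
      rw [← hS', ← hI']
      linarith
  have hzero : Tendsto (fun i => y i ω k - ∑ ℓ, v ℓ * y 0 ω ℓ) atTop (nhds 0) :=
    squeeze_zero_norm hbound hosc
  have := hzero.add_const (∑ ℓ, v ℓ * y 0 ω ℓ)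
  simpa using this
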